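/- arXiv:2502.05672 — 5 statements merged into one kernel-verified Lean document; each statement's English description precedes it below -/
import Mathlib

section
/- Let γ ∈ (0,1) and f_γ(x) = x/(x+γ). For every x ∈ (0,1], the sequence of iterates f_γ^{∘n}(x) converges to 1 - γ as n → ∞. -/
theorem f_gamma_iterates_tendsto (γ : ℝ) (hγ0 : 0 < γ) (hγ1 : γ < 1)
    (x : ℝ) (hx : x ∈ Set.Ioc (0:ℝ) 1) :
    Filter.Tendsto (fun n : ℕ => (fun y : ℝ => y / (y + γ))^[n] x)
      Filter.atTop (nhds (1 - γ)) := by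
  obtain ⟨hx0, hx1⟩ := hx
  set g : ℕ → ℝ := fun n => γ ^ n / x + (1 - γ ^ n) / (1 - γ) with hg
  have h1γ : (0:ℝ) < 1 - γ := by linarith
  have hgpos : ∀ n, 0 < g n := by
    intro n
    have h1 : 0 < γ ^ n / x := div_pos (pow_pos hγ0 n) hx0
    have h2 : γ ^ n ≤ 1 := pow_le_one₀ hγ0.le hγ1.le
    have h3 : 0 ≤ (1 - γ ^ n) / (1 - γ) := div_nonneg (by linarith) h1γ.le
    simp only [hg]; linarith
  have key : ∀ n, (fun y : ℝ => y / (y + γ))^[n] x = 1 / g n := by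
    intro n
    induction n with
    | zero => simp [hg, ne_of_gt hx0]
    | succ n ih =>
      rw [Function.iterate_succ_apply', ih]
      have hgn := hgpos n
      have hgn' : g n ≠ 0 := ne_of_gt hgn
      have hstep : g (n + 1) = 1 + γ * g n := by
        simp only [hg, pow_succ]
        field_simp
        ring
      rw [hstep]
      have h2 : (1:ℝ) + γ * g n ≠ 0 := by positivity
      field_simp
  simp only [key]
  have hγlim : Filter.Tendsto (fun n : ℕ => γ ^ n) Filter.atTop (nhds 0) :=
    tendsto_pow_atTop_nhds_zero_of_lt_one hγ0.le hγ1
  have hglim : Filter.Tendsto g Filter.atTop (nhds (1 / (1 - γ))) := by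
    have h1 : Filter.Tendsto (fun n : ℕ => γ ^ n / x) Filter.atTop (nhds 0) := by
      simpa using hγlim.div_const x
    have h2 : Filter.Tendsto (fun n : ℕ => (1 - γ ^ n) / (1 - γ)) Filter.atTop
        (nhds ((1 - 0) / (1 - γ))) := ((tendsto_const_nhds.sub hγlim).div_const _)
    have := h1.add h2
    simpa [hg] using this
  have hne : (1 / (1 - γ) : ℝ) ≠ 0 := by positivity
  have := hglim.inv₀ hne
  simpa [one_div] using this
end

section
/- Let N ≥ 1, b_0 = (1/(2N))((2N-1)/(2N))^{2N-1}, b ∈ (0, b_0). The map g_l : [0, (2N-1)/(2N)] → [0, (2N-1)/(2N)] defined by g_l(x) = (b/(1-x))^{1/(2N-1)} is a well-defined strict contraction on [0,(2N-1)/(2N)], and its unique fixed point is x_l(b), the smaller positive fixed point of h_b(x) = x^{2N}/(x^{2N}+b). -/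
theorem g_l_contraction (N : ℕ) (hN : 1 ≤ N) (b : ℝ) (hb0 : 0 < b)
    (hb1 : b < (1 / (2 * N)) * ((2 * (N:ℝ) - 1) / (2 * N)) ^ (2 * N - 1))
    (xl : ℝ) (hxl : xl ∈ Set.Ioo (0:ℝ) ((2 * (N:ℝ) - 1) / (2 * N)))
    (hxl_eq : xl ^ (2 * N - 1) * (1 - xl) = b) :
    Set.MapsTo (fun x : ℝ => (b / (1 - x)) ^ (1 / (2 * (N:ℝ) - 1)))
      (Set.Icc 0 ((2 * (N:ℝ) - 1) / (2 * N)))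
      (Set.Icc 0 ((2 * (N:ℝ) - 1) / (2 * N))) ∧
    (∃ L : ℝ, 0 ≤ L ∧ L < 1 ∧
      ∀ x ∈ Set.Icc (0:ℝ) ((2 * (N:ℝ) - 1) / (2 * N)),
        ∀ y ∈ Set.Icc (0:ℝ) ((2 * (N:ℝ) - 1) / (2 * N)),
          |(b / (1 - x)) ^ (1 / (2 * (N:ℝ) - 1)) -
            (b / (1 - y)) ^ (1 / (2 * (N:ℝ) - 1))| ≤ L * |x - y|) ∧
    (b / (1 - xl)) ^ (1 / (2 * (N:ℝ) - 1)) = xl ∧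
    (∀ x ∈ Set.Icc (0:ℝ) ((2 * (N:ℝ) - 1) / (2 * N)),
      (b / (1 - x)) ^ (1 / (2 * (N:ℝ) - 1)) = x → x = xl) := by
  have hN1 : (1:ℝ) ≤ N := by exact_mod_cast hN
  set t : ℝ := 2 * (N:ℝ) - 1 with ht
  have ht1 : 1 ≤ t := by simp only [ht]; linarith
  have ht0 : 0 < t := by linarith
  have h2N : (0:ℝ) < 2 * N := by linarith
  set a : ℝ := t / (2 * N) with ha
  have ha0 : 0 < a := div_pos ht0 h2N
  have ha1 : a < 1 := by
    rw [ha, div_lt_one h2N]; simp only [ht]; linarith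
  have hm : ((2 * N - 1 : ℕ) : ℝ) = t := by
    have h1 : 1 ≤ 2 * N := by omega
    push_cast [Nat.cast_sub h1]
    simp [ht]
  set p : ℝ := 1 / t with hp
  have hp0 : 0 < p := by positivity
  have hpt : p * t = 1 := by rw [hp, one_div, inv_mul_cancel₀ ht0.ne']
  have hpowp : ∀ u : ℝ, 0 ≤ u → ((u ^ (2 * N - 1) : ℝ)) ^ p = u := by
    intro u hu
    rw [← Real.rpow_natCast u (2 * N - 1), ← Real.rpow_mul hu, hm]
    have htp : t * p = 1 := by rw [mul_comm]; exact hpt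
    rw [htp, Real.rpow_one]
  have h1a : 1 - a = 1 / (2 * N) := by
    rw [ha, ht]; field_simp; ring
  have hb1' : 2 * (N:ℝ) * b < a ^ (2 * N - 1) := by
    have := hb1
    rw [div_mul_eq_mul_div, one_mul, lt_div_iff₀ h2N] at this
    linarith [this]
  -- basic facts for x in the interval
  have h1x : ∀ x : ℝ, x ∈ Set.Icc (0:ℝ) a → 0 < 1 - x := fun x hx => by
    have := hx.2; linarith
  have hdle : ∀ x : ℝ, x ∈ Set.Icc (0:ℝ) a → b / (1 - x) ≤ 2 * N * b := by
    intro x hx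
    have h1 := h1x x hx
    rw [div_le_iff₀ h1]
    have hxa : x ≤ a := hx.2
    have hle : 1 / (2 * (N:ℝ)) ≤ 1 - x := by rw [← h1a]; linarith
    have key : 1 ≤ (1 - x) * (2 * (N:ℝ)) := (div_le_iff₀ h2N).mp hle
    nlinarith [mul_le_mul_of_nonneg_left key hb0.le]
  -- MapsTo
  have hmaps : Set.MapsTo (fun x : ℝ => (b / (1 - x)) ^ p)
      (Set.Icc 0 a) (Set.Icc 0 a) := by
    intro x hx
    have h1 := h1x x hx
    have hu0 : 0 < b / (1 - x) := div_pos hb0 h1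
    constructor
    · exact Real.rpow_nonneg hu0.le p
    · have h2 : b / (1 - x) ≤ a ^ (2 * N - 1) := le_trans (hdle x hx) hb1'.le
      calc (b / (1 - x)) ^ p ≤ (a ^ (2 * N - 1)) ^ p :=
            Real.rpow_le_rpow hu0.le h2 hp0.le
        _ = a := hpowp a ha0.le
  -- derivative
  have hderiv : ∀ x ∈ Set.Icc (0:ℝ) a,
      HasDerivWithinAt (fun x : ℝ => (b / (1 - x)) ^ p)
        (p * (b / (1 - x)) ^ p / (1 - x)) (Set.Icc 0 a) x := by
    intro x hx
    have h1 := h1x x hx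
    have hu0 : 0 < b / (1 - x) := div_pos hb0 h1
    have hsub : HasDerivAt (fun y : ℝ => 1 - y) (-1) x := by
      simpa using (hasDerivAt_id x).const_sub 1
    have hquot : HasDerivAt (fun y : ℝ => b / (1 - y)) (b / (1 - x) ^ 2) x := by
      have h := (hasDerivAt_const x b).div hsub h1.ne'
      rw [show b / (1 - x) ^ 2 = (0 * (1 - x) - b * -1) / (1 - x) ^ 2 by ring]
      exact h
    have hrp : HasDerivAt (fun u : ℝ => u ^ p) (p * (b / (1 - x)) ^ (p - 1)) (b / (1 - x)) :=
      Real.hasDerivAt_rpow_const (Or.inl hu0.ne')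
    have hcomp := hrp.comp x hquot
    have heq : p * (b / (1 - x)) ^ (p - 1) * (b / (1 - x) ^ 2)
        = p * (b / (1 - x)) ^ p / (1 - x) := by
      rw [Real.rpow_sub_one hu0.ne']
      field_simp
    rw [heq] at hcomp
    exact hcomp.hasDerivWithinAt
  -- bound on derivative
  set C : ℝ := p * (2 * N * b) ^ p * (2 * N) with hC
  have hC0 : 0 ≤ C := by positivity
  have hbound : ∀ x ∈ Set.Icc (0:ℝ) a,
      ‖p * (b / (1 - x)) ^ p / (1 - x)‖ ≤ C := by
    intro x hx
    have h1 := h1x x hx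
    have hu0 : 0 < b / (1 - x) := div_pos hb0 h1
    have hup : (b / (1 - x)) ^ p ≤ (2 * N * b) ^ p :=
      Real.rpow_le_rpow hu0.le (hdle x hx) hp0.le
    have h1x' : 1 / (2 * (N:ℝ)) ≤ 1 - x := by rw [← h1a]; linarith [hx.2]
    rw [Real.norm_eq_abs, abs_of_nonneg (by positivity)]
    rw [div_le_iff₀ h1, hC]
    have hBnn : 0 ≤ (2 * N * b) ^ p := Real.rpow_nonneg (by positivity) p
    have key : 1 ≤ (1 - x) * (2 * (N:ℝ)) := (div_le_iff₀ h2N).mp h1x'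
    nlinarith [mul_le_mul_of_nonneg_left hup hp0.le,
      mul_le_mul_of_nonneg_left key (by positivity : (0:ℝ) ≤ p * (2 * N * b) ^ p)]
  have hClt : C < 1 := by
    have hstrict : (2 * (N:ℝ) * b) ^ p < (a ^ (2 * N - 1)) ^ p :=
      Real.rpow_lt_rpow (by positivity) hb1' hp0
    rw [hpowp a ha0.le] at hstrict
    have hlt : C < p * a * (2 * N) := by
      rw [hC]
      have h := mul_lt_mul_of_pos_right (mul_lt_mul_of_pos_left hstrict hp0) h2N
      linarith [h]
    have hpa : p * a * (2 * (N:ℝ)) = 1 := by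
      rw [hp, ha]; field_simp
    linarith
  -- Lipschitz
  have hlip : ∀ x ∈ Set.Icc (0:ℝ) a, ∀ y ∈ Set.Icc (0:ℝ) a,
      |(b / (1 - x)) ^ p - (b / (1 - y)) ^ p| ≤ C * |x - y| := by
    intro x hx y hy
    have := (convex_Icc (0:ℝ) a).norm_image_sub_le_of_norm_hasDerivWithin_le
      hderiv hbound hy hx
    simpa [Real.norm_eq_abs] using this
  -- fixed point
  have h1xl : 0 < 1 - xl := by have := hxl.2; linarith [ha1]
  have hfix : (b / (1 - xl)) ^ p = xl := by
    have : b / (1 - xl) = xl ^ (2 * N - 1) := by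
      rw [div_eq_iff h1xl.ne']; linarith [hxl_eq]
    rw [this]
    exact hpowp xl hxl.1.le
  refine ⟨hmaps, ⟨C, hC0, hClt, hlip⟩, hfix, ?_⟩
  intro x hx hfx
  have hxlI : xl ∈ Set.Icc (0:ℝ) a := ⟨hxl.1.le, hxl.2.le⟩
  have h := hlip x hx xl hxlI
  rw [hfx, hfix] at h
  by_contra hne
  have hpos : 0 < |x - xl| := abs_pos.mpr (sub_ne_zero.mpr hne)
  have h2 := mul_lt_mul_of_pos_right hClt hpos
  rw [one_mul] at h2
  linarith
end

section
/- Let N ≥ 1, b_0 = (1/(2N))((2N-1)/(2N))^{2N-1}, b ∈ (0, b_0). The map g_u : [(2N-1)/(2N), 1] → [(2N-1)/(2N), 1] defined by g_u(x) = 1 - b/x^{2N-1} is a well-defined strict contraction, and its unique fixed point is x_u(b), the larger positive fixed point of h_b(x) = x^{2N}/(x^{2N}+b). -/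
theorem g_u_contraction (N : ℕ) (hN : 1 ≤ N) (b : ℝ) (hb0 : 0 < b)
    (hb1 : b < (1 / (2 * N)) * ((2 * (N:ℝ) - 1) / (2 * N)) ^ (2 * N - 1))
    (xu : ℝ) (hxu : xu ∈ Set.Ioo ((2 * (N:ℝ) - 1) / (2 * N)) 1)
    (hxu_eq : xu ^ (2 * N - 1) * (1 - xu) = b) :
    Set.MapsTo (fun x : ℝ => 1 - b / x ^ (2 * N - 1))
      (Set.Icc ((2 * (N:ℝ) - 1) / (2 * N)) 1)
      (Set.Icc ((2 * (N:ℝ) - 1) / (2 * N)) 1) ∧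
    (∃ L : ℝ, 0 ≤ L ∧ L < 1 ∧
      ∀ x ∈ Set.Icc ((2 * (N:ℝ) - 1) / (2 * N)) 1,
        ∀ y ∈ Set.Icc ((2 * (N:ℝ) - 1) / (2 * N)) 1,
          |(1 - b / x ^ (2 * N - 1)) - (1 - b / y ^ (2 * N - 1))| ≤ L * |x - y|) ∧
    1 - b / xu ^ (2 * N - 1) = xu ∧
    (∀ x ∈ Set.Icc ((2 * (N:ℝ) - 1) / (2 * N)) 1,
      1 - b / x ^ (2 * N - 1) = x → x = xu) := by
  have hN1 : (1:ℝ) ≤ N := by exact_mod_cast hN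
  set c : ℝ := (2 * (N:ℝ) - 1) / (2 * N) with hc
  have h2N : (0:ℝ) < 2 * N := by linarith
  have hc0 : 0 < c := by
    apply div_pos _ h2N; linarith
  have hc1 : c < 1 := by
    rw [hc, div_lt_one h2N]; linarith
  have h1c : 1 - c = 1 / (2 * N) := by
    rw [hc]; field_simp; ring
  have hb1' : b < (1 - c) * c ^ (2 * N - 1) := by
    rw [h1c]; exact hb1
  -- basic facts for x in the interval
  have key : ∀ x ∈ Set.Icc c 1, c ≤ 1 - b / x ^ (2 * N - 1) ∧ 1 - b / x ^ (2 * N - 1) ≤ 1 := by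
    intro x hx
    obtain ⟨hxl, hxr⟩ := hx
    have hx0 : 0 < x := lt_of_lt_of_le hc0 hxl
    have hxm0 : 0 < x ^ (2 * N - 1) := pow_pos hx0 _
    have hcm0 : 0 < c ^ (2 * N - 1) := pow_pos hc0 _
    have hcmx : c ^ (2 * N - 1) ≤ x ^ (2 * N - 1) := pow_le_pow_left₀ hc0.le hxl _
    constructor
    · have h1 : b / x ^ (2 * N - 1) ≤ b / c ^ (2 * N - 1) :=
        div_le_div_of_nonneg_left hb0.le hcm0 hcmx
      have h2 : b / c ^ (2 * N - 1) < 1 - c := by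
        rw [div_lt_iff₀ hcm0]; nlinarith
      linarith
    · have : 0 < b / x ^ (2 * N - 1) := div_pos hb0 hxm0
      linarith
  -- Lipschitz constant
  set L : ℝ := b * (2 * (N:ℝ) - 1) / c ^ (2 * N) with hL
  have hc2N : 0 < c ^ (2 * N) := pow_pos hc0 _
  have hLpos : 0 ≤ L := by
    apply div_nonneg _ hc2N.le
    nlinarith
  have hL1 : L < 1 := by
    rw [hL, div_lt_one hc2N]
    have hcN : c ^ (2 * N) = c ^ (2 * N - 1) * c := by
      conv_lhs => rw [show 2 * N = (2 * N - 1) + 1 from by omega]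
      rw [pow_succ]
    have heq : (1 - c) * (2 * (N:ℝ) - 1) = c := by
      rw [h1c, hc]; field_simp
    have hcm0 : 0 < c ^ (2 * N - 1) := pow_pos hc0 _
    have h2N1 : (0:ℝ) < 2 * (N:ℝ) - 1 := by linarith
    have := mul_lt_mul_of_pos_right hb1' h2N1
    rw [hcN]
    nlinarith
  -- the derivative bound
  have hlip : ∀ x ∈ Set.Icc c 1, ∀ y ∈ Set.Icc c 1,
      |(1 - b / x ^ (2 * N - 1)) - (1 - b / y ^ (2 * N - 1))| ≤ L * |x - y| := by
    have hderiv : ∀ x ∈ Set.Icc c 1,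
        HasDerivWithinAt (fun x : ℝ => 1 - b / x ^ (2 * N - 1))
          (b * ((2 * N - 1 : ℕ) * x ^ (2 * N - 1 - 1)) / (x ^ (2 * N - 1)) ^ 2)
          (Set.Icc c 1) x := by
      intro x hx
      have hx0 : 0 < x := lt_of_lt_of_le hc0 hx.1
      have hxm0 : x ^ (2 * N - 1) ≠ 0 := (pow_pos hx0 _).ne'
      have h1 : HasDerivAt (fun x : ℝ => x ^ (2 * N - 1))
          ((2 * N - 1 : ℕ) * x ^ (2 * N - 1 - 1)) x := hasDerivAt_pow _ _
      have h2 := ((h1.inv hxm0).const_mul b).const_sub 1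
      have h3 : ∀ y : ℝ, 1 - b * (y ^ (2 * N - 1))⁻¹ = 1 - b / y ^ (2 * N - 1) := by
        intro y; rw [div_eq_mul_inv]
      have h4 := h2.congr_deriv (by ring :
        -(b * (-(↑(2 * N - 1) * x ^ (2 * N - 1 - 1)) / (x ^ (2 * N - 1)) ^ 2))
          = b * ((2 * N - 1 : ℕ) * x ^ (2 * N - 1 - 1)) / (x ^ (2 * N - 1)) ^ 2)
      have h5 : (fun x : ℝ => 1 - b * (x ^ (2 * N - 1))⁻¹)
          = fun x : ℝ => 1 - b / x ^ (2 * N - 1) := funext h3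
      simp only [Pi.inv_apply] at h4
      rw [h5] at h4
      exact h4.hasDerivWithinAt
    have hbound : ∀ x ∈ Set.Icc c 1,
        ‖b * ((2 * N - 1 : ℕ) * x ^ (2 * N - 1 - 1)) / (x ^ (2 * N - 1)) ^ 2‖ ≤ L := by
      intro x hx
      have hx0 : 0 < x := lt_of_lt_of_le hc0 hx.1
      have hm1 : (2 * N - 1 : ℕ) - 1 = 2 * N - 2 := by omega
      have hsq : (x ^ (2 * N - 1)) ^ 2 = x ^ (2 * N - 2) * x ^ (2 * N) := by
        rw [← pow_mul, ← pow_add]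
        congr 1
        omega
      have hcast : ((2 * N - 1 : ℕ) : ℝ) = 2 * (N:ℝ) - 1 := by
        have h1 : (1:ℕ) ≤ 2 * N := by omega
        push_cast [h1]
        ring
      have hval : b * ((2 * N - 1 : ℕ) * x ^ (2 * N - 1 - 1)) / (x ^ (2 * N - 1)) ^ 2
          = b * (2 * (N:ℝ) - 1) / x ^ (2 * N) := by
        rw [hm1, hsq, hcast]
        have h22 : x ^ (2 * N - 2) ≠ 0 := (pow_pos hx0 _).ne'
        field_simp
      rw [hval]
      have hpos : 0 ≤ b * (2 * (N:ℝ) - 1) / x ^ (2 * N) := by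
        apply div_nonneg _ (pow_pos hx0 _).le
        nlinarith
      rw [Real.norm_eq_abs, abs_of_nonneg hpos, hL]
      apply div_le_div_of_nonneg_left (by nlinarith) hc2N
      exact pow_le_pow_left₀ hc0.le hx.1 _
    intro x hx y hy
    have := (convex_Icc c 1).norm_image_sub_le_of_norm_hasDerivWithin_le hderiv hbound hy hx
    rw [Real.norm_eq_abs, Real.norm_eq_abs] at this
    exact this
  -- xu facts
  have hxuI : xu ∈ Set.Icc c 1 := ⟨hxu.1.le, hxu.2.le⟩
  have hxu0 : 0 < xu := lt_of_lt_of_le hc0 hxuI.1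
  have hxum : xu ^ (2 * N - 1) ≠ 0 := (pow_pos hxu0 _).ne'
  have hfix : 1 - b / xu ^ (2 * N - 1) = xu := by
    have h : b / xu ^ (2 * N - 1) = 1 - xu := by
      rw [← hxu_eq, mul_comm, mul_div_assoc, div_self hxum, mul_one]
    rw [h]; ring
  refine ⟨?_, ⟨L, hLpos, hL1, hlip⟩, hfix, ?_⟩
  · intro x hx
    exact ⟨(key x hx).1, (key x hx).2⟩
  · intro x hx hfx
    have h := hlip x hx xu hxuI
    rw [hfix, hfx] at h
    have habs : |x - xu| ≤ L * |x - xu| := h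
    have h3 : |x - xu| ≤ 0 := by nlinarith [abs_nonneg (x - xu)]
    have h4 : x - xu = 0 := abs_eq_zero.mp (le_antisymm h3 (abs_nonneg _))
    linarith
end

section
/- Let γ, ε > 0 with γ + ε < 1, |A| ≥ M > 0 (real or integer parameters), and define z(x) = (1-ε)·x/(x+γ) + ε·M/|A| for x ∈ [0,1]. Then z has a unique fixed point x* in [0,1] given by x* = (x̂ + √(x̂² + 4γεM/|A|))/2 where x̂ = 1 - ε(1 - M/|A|) - γ; moreover x̂ ≤ x* and 0 < x* < 1, z(x) > x for x < x*, and z(x) < x for x > x*. -/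
theorem z_fixed_point (γ ε M A : ℝ) (hγ : 0 < γ) (hε : 0 < ε)
    (hγε : γ + ε < 1) (hM : 0 < M) (hMA : M ≤ A) :
    let xhat := 1 - ε * (1 - M / A) - γ
    let xstar := (xhat + Real.sqrt (xhat ^ 2 + 4 * γ * ε * M / A)) / 2
    xhat ≤ xstar ∧ 0 < xstar ∧ xstar < 1 ∧
    (1 - ε) * xstar / (xstar + γ) + ε * M / A = xstar ∧
    (∀ x ∈ Set.Icc (0:ℝ) 1,
      (1 - ε) * x / (x + γ) + ε * M / A = x → x = xstar) ∧
    (∀ x ∈ Set.Icc (0:ℝ) 1, x < xstar → x < (1 - ε) * x / (x + γ) + ε * M / A) ∧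
    (∀ x ∈ Set.Icc (0:ℝ) 1, xstar < x → (1 - ε) * x / (x + γ) + ε * M / A < x) := by
  intro xhat xstar
  have hA : 0 < A := lt_of_lt_of_le hM hMA
  set t : ℝ := M / A with ht_def
  have ht0 : 0 < t := by positivity
  have ht1 : t ≤ 1 := (div_le_one hA).2 hMA
  have he1 : ε * M / A = ε * t := by rw [ht_def]; ring
  have hd4 : 4 * γ * ε * M / A = 4 * γ * ε * t := by rw [ht_def]; ring
  have hxhat_eq : xhat = 1 - ε * (1 - t) - γ := rfl
  have het : 0 ≤ ε * (1 - t) := mul_nonneg hε.le (by linarith)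
  have hD : 0 < xhat ^ 2 + 4 * γ * ε * M / A := by
    have h1 : 0 < 4 * γ * ε * M / A := by positivity
    nlinarith [sq_nonneg xhat]
  set s : ℝ := Real.sqrt (xhat ^ 2 + 4 * γ * ε * M / A) with hs_def
  have hs2 : s ^ 2 = xhat ^ 2 + 4 * γ * ε * t := by
    rw [hs_def, Real.sq_sqrt hD.le, hd4]
  have hs2' : s ^ 2 = (1 - ε * (1 - t) - γ) ^ 2 + 4 * γ * ε * t := by
    rw [hs2, hxhat_eq]
  have hs0 : 0 ≤ s := Real.sqrt_nonneg _
  have hs_abs : |xhat| < s := by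
    rw [hs_def]
    rw [show xhat ^ 2 + 4 * γ * ε * M / A = xhat ^ 2 + 4 * γ * ε * t from hd4 ▸ rfl]
    refine (Real.lt_sqrt (abs_nonneg xhat)).2 ?_
    have : 0 < 4 * γ * ε * t := by positivity
    nlinarith [sq_abs xhat]
  have habs1 : xhat ≤ |xhat| := le_abs_self xhat
  have habs2 : -xhat ≤ |xhat| := neg_le_abs xhat
  have hxstar_eq : xstar = (xhat + s) / 2 := rfl
  set x2 : ℝ := (xhat - s) / 2 with hx2_def
  have hx2neg : x2 < 0 := by rw [hx2_def]; linarith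
  have hxstar_pos : 0 < xstar := by rw [hxstar_eq]; linarith
  have hxhat_le : xhat ≤ xstar := by rw [hxstar_eq]; linarith
  have h2x : 0 < 2 - xhat := by rw [hxhat_eq]; linarith
  have hxstar1 : xstar < 1 := by
    have h2 : s < 2 - xhat := by
      rw [hs_def]
      refine (Real.sqrt_lt' h2x).2 ?_
      rw [hd4, hxhat_eq]
      nlinarith [mul_nonneg (mul_nonneg hγ.le hε.le) (by linarith : (0:ℝ) ≤ 1 - t),
        mul_pos hγ (by linarith : (0:ℝ) < 1 - ε), het]
    rw [hxstar_eq]; linarith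
  -- key identity
  have hkey : ∀ x : ℝ, 0 ≤ x →
      (1 - ε) * x / (x + γ) + ε * M / A - x = (xstar - x) * (x - x2) / (x + γ) := by
    intro x hx
    have hxγ : (0:ℝ) < x + γ := by linarith
    rw [he1, hxstar_eq, hx2_def, hxhat_eq]
    rw [eq_div_iff hxγ.ne']
    have hc : (1 - ε) * x / (x + γ) * (x + γ) = (1 - ε) * x := div_mul_cancel₀ _ hxγ.ne'
    linear_combination hc + (-1/4 : ℝ) * hs2'
  have hfix : (1 - ε) * xstar / (xstar + γ) + ε * M / A = xstar := by
    have h := hkey xstar hxstar_pos.le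
    rw [sub_self, zero_mul, zero_div] at h
    linarith
  refine ⟨hxhat_le, hxstar_pos, hxstar1, hfix, ?_, ?_, ?_⟩
  · intro x hx hfx
    have h := hkey x hx.1
    rw [hfx, sub_self] at h
    have hxγ : (0:ℝ) < x + γ := by linarith [hx.1]
    have h0 : (xstar - x) * (x - x2) = 0 ∨ x + γ = 0 := div_eq_zero_iff.1 h.symm
    rcases h0 with h0 | h0
    · rcases mul_eq_zero.1 h0 with h1 | h1
      · linarith [sub_eq_zero.1 h1]
      · exfalso; have := hx.1; linarith [sub_eq_zero.1 h1]
    · exfalso; linarith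
  · intro x hx hlt
    have h := hkey x hx.1
    have hxγ : (0:ℝ) < x + γ := by linarith [hx.1]
    have hpos : 0 < (xstar - x) * (x - x2) / (x + γ) :=
      div_pos (mul_pos (by linarith) (by linarith [hx.1])) hxγ
    linarith
  · intro x hx hlt
    have h := hkey x hx.1
    have hxγ : (0:ℝ) < x + γ := by linarith [hx.1]
    have hneg : (xstar - x) * (x - x2) / (x + γ) < 0 :=
      div_neg_of_neg_of_pos (mul_neg_of_neg_of_pos (by linarith) (by linarith [hx.1])) hxγ
    linarith
end

section
/- Let N ≥ 1, b ∈ (0, b_0) with b_0 = (1/(2N))((2N-1)/(2N))^{2N-1}, and h_b(x) = x^{2N}/(x^{2N}+b) with larger fixed point x_u = x_u(b). Then the derivative of h_b at x_u equals 2N·b·x_u^{2N-1}/(x_u^{2N}+b)², and this value is strictly less than 1; consequently, for x_0 ∈ (x_l(b), 1] with x_0 ≠ x_u, the sequence y_n = 2(1 - h_b^{∘n}(x_0)) converges q-linearly to 2(1-x_u) with rate 2N·b·x_u^{2N-1}/(x_u^{2N}+b)². -/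
open Filter Set Topology

private lemma hb_denom_pos (N : ℕ) (b : ℝ) (hb : 0 < b) (x : ℝ) : 0 < x ^ (2*N) + b := by
  have h : (0:ℝ) ≤ x ^ (2*N) := by
    rw [pow_mul]; exact pow_nonneg (sq_nonneg x) N
  linarith

private lemma hb_hasDeriv (N : ℕ) (b : ℝ) (hb : 0 < b) (x : ℝ) :
    HasDerivAt (fun y : ℝ => y ^ (2*N) / (y ^ (2*N) + b))
      (2*(N:ℝ)*b*x^(2*N-1)/(x^(2*N)+b)^2) x := by
  have h1 : HasDerivAt (fun y : ℝ => y ^ (2*N)) (((2*N : ℕ):ℝ) * x ^ (2*N-1)) x := by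
    simpa using hasDerivAt_pow (2*N) x
  have h2 := (h1.add_const b)
  have h3 := h1.div h2 (ne_of_gt (hb_denom_pos N b hb x))
  refine HasDerivAt.congr_deriv h3 ?_
  have hd := (hb_denom_pos N b hb x).ne'
  push_cast
  ring

private lemma hb_mono (N : ℕ) (hN : 1 ≤ N) (b : ℝ) (hb : 0 < b) :
    StrictMonoOn (fun y : ℝ => y ^ (2*N) / (y ^ (2*N) + b)) (Ici 0) := by
  intro x hx y hy hxy
  simp only [mem_Ici] at hx hy
  have hp : x ^ (2*N) < y ^ (2*N) := by
    apply pow_lt_pow_left₀ hxy hx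
    omega
  rw [div_lt_div_iff₀ (hb_denom_pos N b hb x) (hb_denom_pos N b hb y)]
  nlinarith

private lemma hb_cont (N : ℕ) (b : ℝ) (hb : 0 < b) :
    Continuous (fun y : ℝ => y ^ (2*N) / (y ^ (2*N) + b)) := by
  apply Continuous.div (by fun_prop) (by fun_prop)
  exact fun x => (hb_denom_pos N b hb x).ne'

private lemma hb_psi_deriv (N : ℕ) (x : ℝ) :
    HasDerivAt (fun y : ℝ => y ^ (2*N-1) * (1 - y))
      (((2*N-1 : ℕ):ℝ) * x ^ (2*N-1-1) * (1-x) + x ^ (2*N-1) * (0-1)) x :=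
  (hasDerivAt_pow (2*N-1) x).mul ((hasDerivAt_const x (1:ℝ)).sub (hasDerivAt_id x))

private lemma hb_psi_mono (N : ℕ) (hN : 1 ≤ N) :
    StrictMonoOn (fun y : ℝ => y ^ (2*N-1) * (1 - y))
      (Icc 0 ((2*(N:ℝ)-1)/(2*N))) := by
  have hN1 : (1:ℝ) ≤ N := Nat.one_le_cast.mpr hN
  apply strictMonoOn_of_deriv_pos (convex_Icc _ _) (by fun_prop)
  intro x hx
  rw [interior_Icc] at hx
  rw [(hb_psi_deriv N x).deriv]
  have hcast : ((2*N-1 : ℕ):ℝ) = 2*(N:ℝ)-1 := by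
    have h1 : (1:ℕ) ≤ 2*N := by omega
    push_cast [h1]; ring
  have hps : x ^ (2*N-1) = x ^ (2*N-1-1) * x := by
    rw [← pow_succ]; congr 1; omega
  have hxp : 0 < x ^ (2*N-1-1) := pow_pos hx.1 _
  have hlt : 2*(N:ℝ)*x < 2*(N:ℝ)-1 := by
    have h2 := hx.2
    rw [lt_div_iff₀ (by linarith : (0:ℝ) < 2*N)] at h2
    linarith
  rw [hcast, hps]
  nlinarith

private lemma hb_psi_anti (N : ℕ) (hN : 1 ≤ N) :
    StrictAntiOn (fun y : ℝ => y ^ (2*N-1) * (1 - y))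
      (Icc ((2*(N:ℝ)-1)/(2*N)) 1) := by
  have hN1 : (1:ℝ) ≤ N := Nat.one_le_cast.mpr hN
  have hc0 : 0 < (2*(N:ℝ)-1)/(2*N) := div_pos (by linarith) (by linarith)
  apply strictAntiOn_of_deriv_neg (convex_Icc _ _) (by fun_prop)
  intro x hx
  rw [interior_Icc] at hx
  rw [(hb_psi_deriv N x).deriv]
  have hcast : ((2*N-1 : ℕ):ℝ) = 2*(N:ℝ)-1 := by
    have h1 : (1:ℕ) ≤ 2*N := by omega
    push_cast [h1]; ring
  have hx0 : 0 < x := lt_trans hc0 hx.1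
  have hps : x ^ (2*N-1) = x ^ (2*N-1-1) * x := by
    rw [← pow_succ]; congr 1; omega
  have hxp : 0 < x ^ (2*N-1-1) := pow_pos hx0 _
  have hlt : 2*(N:ℝ)-1 < 2*(N:ℝ)*x := by
    have h2 := hx.1
    rw [div_lt_iff₀ (by linarith : (0:ℝ) < 2*N)] at h2
    linarith
  rw [hcast, hps]
  nlinarith
theorem h_b_qlinear (N : ℕ) (hN : 1 ≤ N) (b : ℝ) (hb0 : 0 < b)
    (hb1 : b < (1 / (2 * N)) * ((2 * (N:ℝ) - 1) / (2 * N)) ^ (2 * N - 1))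
    (xl xu : ℝ)
    (hxl : xl ∈ Set.Ioo (0:ℝ) ((2 * (N:ℝ) - 1) / (2 * N)))
    (hxl_eq : xl ^ (2 * N - 1) * (1 - xl) = b)
    (hxu : xu ∈ Set.Ioo ((2 * (N:ℝ) - 1) / (2 * N)) 1)
    (hxu_eq : xu ^ (2 * N - 1) * (1 - xu) = b) :
    HasDerivAt (fun x : ℝ => x ^ (2 * N) / (x ^ (2 * N) + b))
      (2 * (N:ℝ) * b * xu ^ (2 * N - 1) / (xu ^ (2 * N) + b) ^ 2) xu ∧
    2 * (N:ℝ) * b * xu ^ (2 * N - 1) / (xu ^ (2 * N) + b) ^ 2 < 1 ∧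
    (∀ x₀ ∈ Set.Ioc xl 1, x₀ ≠ xu →
      Filter.Tendsto
        (fun n : ℕ =>
          |2 * (1 - (fun y : ℝ => y ^ (2 * N) / (y ^ (2 * N) + b))^[n + 1] x₀)
              - 2 * (1 - xu)| /
          |2 * (1 - (fun y : ℝ => y ^ (2 * N) / (y ^ (2 * N) + b))^[n] x₀)
              - 2 * (1 - xu)|)
        Filter.atTop
        (nhds (2 * (N:ℝ) * b * xu ^ (2 * N - 1) / (xu ^ (2 * N) + b) ^ 2))) := by
  have hN1 : (1:ℝ) ≤ N := Nat.one_le_cast.mpr hN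
  have h2N : (0:ℝ) < 2*N := by linarith
  set f : ℝ → ℝ := fun x : ℝ => x ^ (2 * N) / (x ^ (2 * N) + b) with hfdef
  have hdf : ∀ x : ℝ, HasDerivAt f (2*(N:ℝ)*b*x^(2*N-1)/(x^(2*N)+b)^2) x :=
    hb_hasDeriv N b hb0
  have hmf : StrictMonoOn f (Ici 0) := hb_mono N hN b hb0
  have hcf : Continuous f := hb_cont N b hb0
  have hdenom := hb_denom_pos N b hb0
  have hc0 : (0:ℝ) < (2 * (N:ℝ) - 1) / (2 * N) := div_pos (by linarith) h2N
  have hxu0 : 0 < xu := lt_trans hc0 hxu.1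
  have hxl0 : 0 < xl := hxl.1
  have hlu : xl < xu := lt_trans hxl.2 hxu.1
  have hps : ∀ x : ℝ, x ^ (2*N) = x ^ (2*N-1) * x := by
    intro x; rw [← pow_succ]; congr 1; omega
  have hxupow : 0 < xu ^ (2*N-1) := pow_pos hxu0 _
  have hkey : xu ^ (2*N) + b = xu ^ (2*N-1) := by nlinarith [hps xu, hxu_eq]
  have hfxu : f xu = xu := by
    show xu ^ (2*N) / (xu ^ (2*N) + b) = xu
    rw [hkey, hps xu]
    exact mul_div_cancel_left₀ xu hxupow.ne'
  have hr_eq : 2 * (N:ℝ) * b * xu ^ (2 * N - 1) / (xu ^ (2 * N) + b) ^ 2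
      = 2*(N:ℝ)*(1-xu) := by
    rw [hkey, ← hxu_eq]
    field_simp
  have hr_lt : 2 * (N:ℝ) * b * xu ^ (2 * N - 1) / (xu ^ (2 * N) + b) ^ 2 < 1 := by
    rw [hr_eq]
    have h2 := hxu.1
    rw [div_lt_iff₀ h2N] at h2
    nlinarith
  have hr_nonneg : 0 ≤ 2 * (N:ℝ) * b * xu ^ (2 * N - 1) / (xu ^ (2 * N) + b) ^ 2 :=
    div_nonneg (mul_nonneg (mul_nonneg (by linarith) hb0.le) hxupow.le) (sq_nonneg _)
  -- sign of psi
  have hpsi_gt : ∀ x, xl < x → x < xu → b < x ^ (2*N-1) * (1-x) := by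
    intro x h1 h2
    rcases le_or_gt x ((2 * (N:ℝ) - 1) / (2 * N)) with hxc | hxc
    · have h3 := hb_psi_mono N hN (show xl ∈ Icc 0 ((2*(N:ℝ)-1)/(2*N)) from ⟨hxl0.le, hxl.2.le⟩)
        (show x ∈ Icc 0 ((2*(N:ℝ)-1)/(2*N)) from ⟨(lt_trans hxl0 h1).le, hxc⟩) h1
      simp only [] at h3
      rwa [hxl_eq] at h3
    · have h3 := hb_psi_anti N hN
        (show x ∈ Icc ((2*(N:ℝ)-1)/(2*N)) 1 from ⟨hxc.le, (lt_trans h2 hxu.2).le⟩)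
        (show xu ∈ Icc ((2*(N:ℝ)-1)/(2*N)) 1 from ⟨hxu.1.le, hxu.2.le⟩) h2
      simp only [] at h3
      rwa [hxu_eq] at h3
  have hpsi_lt : ∀ x, xu < x → x ≤ 1 → x ^ (2*N-1) * (1-x) < b := by
    intro x h1 h2
    have h3 := hb_psi_anti N hN
      (show xu ∈ Icc ((2*(N:ℝ)-1)/(2*N)) 1 from ⟨hxu.1.le, hxu.2.le⟩)
      (show x ∈ Icc ((2*(N:ℝ)-1)/(2*N)) 1 from ⟨(lt_trans hxu.1 h1).le, h2⟩) h1
    simp only [] at h3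
    rwa [hxu_eq] at h3
  have hf_gt : ∀ x, xl < x → x < xu → x < f x := by
    intro x h1 h2
    have hx0 : 0 < x := lt_trans hxl0 h1
    have hpsi := hpsi_gt x h1 h2
    show x < x ^ (2*N) / (x ^ (2*N) + b)
    rw [lt_div_iff₀ (hdenom x)]
    nlinarith [mul_lt_mul_of_pos_left hpsi hx0, hps x]
  have hf_lt : ∀ x, xu < x → x ≤ 1 → f x < x := by
    intro x h1 h2
    have hx0 : 0 < x := lt_trans hxu0 h1
    have hpsi := hpsi_lt x h1 h2
    show x ^ (2*N) / (x ^ (2*N) + b) < x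
    rw [div_lt_iff₀ (hdenom x)]
    nlinarith [mul_lt_mul_of_pos_left hpsi hx0, hps x]
  have hfix_unique : ∀ L, xl < L → L ≤ 1 → f L = L → L = xu := by
    intro L h1 h2 hfix
    have hL0 : 0 < L := lt_trans hxl0 h1
    have h3 : L ^ (2*N) = L * (L ^ (2*N) + b) := (div_eq_iff (hdenom L).ne').mp hfix
    have h5 : L ^ (2*N-1) * L = L * (L ^ (2*N-1) * L + b) := by rw [← hps L]; exact h3
    have h4 : L * (L ^ (2*N-1) * (1-L) - b) = 0 := by linear_combination h5
    have h6 : L ^ (2*N-1) * (1-L) = b := by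
      rcases mul_eq_zero.mp h4 with h | h
      · exact absurd h hL0.ne'
      · linarith
    by_contra hne
    rcases lt_or_gt_of_ne hne with hlt | hgt
    · exact absurd h6 (ne_of_gt (hpsi_gt L h1 hlt))
    · exact absurd h6 (ne_of_lt (hpsi_lt L hgt h2))
  -- convergence of iterates
  have hconv : ∀ x₀, xl < x₀ → x₀ ≤ 1 → x₀ ≠ xu →
      Tendsto (fun n => f^[n] x₀) atTop (𝓝 xu) ∧ ∀ n, f^[n] x₀ ≠ xu := by
    intro x₀ h1 h2 hne
    rcases lt_or_gt_of_ne hne with hlt | hgt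
    · have inv : ∀ n, x₀ ≤ f^[n] x₀ ∧ f^[n] x₀ < xu := by
        intro n; induction n with
        | zero => exact ⟨le_refl _, hlt⟩
        | succ n ih =>
          rw [Function.iterate_succ_apply']
          have hgtn := hf_gt _ (lt_of_lt_of_le h1 ih.1) ih.2
          have hltn : f (f^[n] x₀) < xu := by
            have h4 := hmf (mem_Ici.mpr (le_trans (lt_trans hxl0 h1).le ih.1))
              (mem_Ici.mpr hxu0.le) ih.2
            rwa [hfxu] at h4
          exact ⟨le_trans ih.1 hgtn.le, hltn⟩
      have hmono : Monotone (fun n => f^[n] x₀) := monotone_nat_of_le_succ (fun n => by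
        rw [Function.iterate_succ_apply']
        exact (hf_gt _ (lt_of_lt_of_le h1 (inv n).1) (inv n).2).le)
      have hbdd : BddAbove (Set.range fun n => f^[n] x₀) :=
        ⟨xu, by rintro y ⟨n, rfl⟩; exact (inv n).2.le⟩
      have htend := tendsto_atTop_ciSup hmono hbdd
      set L := ⨆ n, f^[n] x₀ with hL
      have hL_le : L ≤ xu := ciSup_le (fun n => (inv n).2.le)
      have hL_ge : x₀ ≤ L := by simpa using le_ciSup hbdd 0
      have hfL : f L = L := by
        have ht1 : Tendsto (fun n => f^[n+1] x₀) atTop (𝓝 L) :=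
          htend.comp (tendsto_add_atTop_nat 1)
        have ht2 : Tendsto (fun n => f (f^[n] x₀)) atTop (𝓝 (f L)) :=
          ((hcf.tendsto L).comp htend)
        have heq : (fun n => f (f^[n] x₀)) = fun n => f^[n+1] x₀ := by
          funext n; rw [Function.iterate_succ_apply']
        rw [heq] at ht2
        exact tendsto_nhds_unique ht2 ht1
      have hLxu : L = xu :=
        hfix_unique L (lt_of_lt_of_le h1 hL_ge) (le_trans hL_le hxu.2.le) hfL
      rw [hLxu] at htend
      exact ⟨htend, fun n => (inv n).2.ne⟩
    · have inv : ∀ n, xu < f^[n] x₀ ∧ f^[n] x₀ ≤ x₀ := by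
        intro n; induction n with
        | zero => exact ⟨hgt, le_refl _⟩
        | succ n ih =>
          rw [Function.iterate_succ_apply']
          have hltn := hf_lt _ ih.1 (le_trans ih.2 h2)
          have hgtn : xu < f (f^[n] x₀) := by
            have h4 := hmf (mem_Ici.mpr hxu0.le)
              (mem_Ici.mpr (le_trans hxu0.le ih.1.le)) ih.1
            rwa [hfxu] at h4
          exact ⟨hgtn, le_trans hltn.le ih.2⟩
      have hanti : Antitone (fun n => f^[n] x₀) := antitone_nat_of_succ_le (fun n => by
        rw [Function.iterate_succ_apply']
        exact (hf_lt _ (inv n).1 (le_trans (inv n).2 h2)).le)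
      have hbdd : BddBelow (Set.range fun n => f^[n] x₀) :=
        ⟨xu, by rintro y ⟨n, rfl⟩; exact (inv n).1.le⟩
      have htend := tendsto_atTop_ciInf hanti hbdd
      set L := ⨅ n, f^[n] x₀ with hL
      have hL_ge : xu ≤ L := le_ciInf (fun n => (inv n).1.le)
      have hL_le : L ≤ x₀ := by simpa using ciInf_le hbdd 0
      have hfL : f L = L := by
        have ht1 : Tendsto (fun n => f^[n+1] x₀) atTop (𝓝 L) :=
          htend.comp (tendsto_add_atTop_nat 1)
        have ht2 : Tendsto (fun n => f (f^[n] x₀)) atTop (𝓝 (f L)) :=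
          ((hcf.tendsto L).comp htend)
        have heq : (fun n => f (f^[n] x₀)) = fun n => f^[n+1] x₀ := by
          funext n; rw [Function.iterate_succ_apply']
        rw [heq] at ht2
        exact tendsto_nhds_unique ht2 ht1
      have hLxu : L = xu :=
        hfix_unique L (lt_of_lt_of_le hlu hL_ge) (le_trans hL_le h2) hfL
      rw [hLxu] at htend
      exact ⟨htend, fun n => (inv n).1.ne'⟩
  refine ⟨hdf xu, hr_lt, ?_⟩
  intro x₀ hx₀ hne₀
  obtain ⟨htend, hnen⟩ := hconv x₀ hx₀.1 hx₀.2 hne₀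
  have hd := hdf xu
  rw [hasDerivAt_iff_tendsto_slope] at hd
  have habs : Tendsto (fun z => |slope f xu z|) (𝓝[≠] xu)
      (𝓝 (2 * (N:ℝ) * b * xu ^ (2 * N - 1) / (xu ^ (2 * N) + b) ^ 2)) := by
    have h := hd.abs
    rwa [abs_of_nonneg hr_nonneg] at h
  have hwithin : Tendsto (fun n => f^[n] x₀) atTop (𝓝[≠] xu) :=
    tendsto_nhdsWithin_of_tendsto_nhds_of_eventually_within _ htend
      (Filter.Eventually.of_forall (fun n => hnen n))
  have hfinal := habs.comp hwithin
  refine Filter.Tendsto.congr (fun n => ?_) hfinal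
  have e1 : ∀ u : ℝ, |2*(1-u) - 2*(1-xu)| = 2 * |u - xu| := by
    intro u
    rw [show 2*(1-u) - 2*(1-xu) = -(2*(u - xu)) by ring, abs_neg, abs_mul, abs_two]
  simp only [Function.comp_apply]
  rw [e1, e1, mul_div_mul_left _ _ (two_ne_zero), slope_def_field, hfxu, abs_div,
    show f^[n+1] x₀ = f (f^[n] x₀) from Function.iterate_succ_apply' f n x₀]
end
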